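/- Let {a^{(j)}}_{j=1}^J be K-dimensional real vectors with all components positive, and set a^{(j)}_{K+1} := 1. Let A_{a^{(j)}} denote the K×K companion matrix with ones on the superdiagonal and last row (−a^{(j)}₁, …, −a^{(j)}_K). Then for any finite product of such matrices A_{a^{(j₁)}} ⋯ A_{a^{(j_k)}}, the spectral radius satisfies SpecRad(∏_{i=1}^k A_{a^{(j_i)}}) ≤ (max_{j,k} a^{(j)}_k / a^{(j)}_{k+1})^k. -/

import Mathlib

open Finset Matrix




lemma root_charpoly_eigen {n : Type*} [Fintype n] [DecidableEq n] (M : Matrix n n ℂ) (z : ℂ)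
    (h : M.charpoly.IsRoot z) : ∃ v, v ≠ 0 ∧ M *ᵥ v = z • v := by
  have hd : (z • (1 : Matrix n n ℂ) - M).det = 0 := by
    have h2 := h
    rw [Polynomial.IsRoot, Matrix.eval_charpoly] at h2
    simpa [Matrix.scalar, Matrix.smul_one_eq_diagonal, Pi.algebraMap_def] using h2
  obtain ⟨v, hv, hMv⟩ := (Matrix.exists_mulVec_eq_zero_iff).2 hd
  refine ⟨v, hv, ?_⟩
  have := hMv
  rw [Matrix.sub_mulVec, sub_eq_zero, Matrix.smul_mulVec, Matrix.one_mulVec] at this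
  exact this.symm

noncomputable def tailSum (K : ℕ) (v : Fin (K+1) → ℂ) (j : ℕ) : ℂ :=
  ∑ l : Fin (K+1), if j ≤ (l : ℕ) then v l else 0

lemma tailSum_eq_zero (K : ℕ) (v : Fin (K+1) → ℂ) (j : ℕ) (h : K + 1 ≤ j) :
    tailSum K v j = 0 := by
  unfold tailSum
  apply Finset.sum_eq_zero
  intro l _
  rw [if_neg]
  omega

lemma tailSum_sub_succ (K : ℕ) (v : Fin (K+1) → ℂ) (l : Fin (K+1)) :
    tailSum K v l - tailSum K v (l+1) = v l := by
  unfold tailSum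
  rw [← Finset.sum_sub_distrib]
  have : ∀ m : Fin (K+1), ((if (l:ℕ) ≤ (m:ℕ) then v m else 0) - (if (l:ℕ)+1 ≤ (m:ℕ) then v m else 0))
      = if m = l then v m else 0 := by
    intro m
    by_cases h1 : m = l
    · subst h1; simp
    · have h2 : (l:ℕ) ≤ (m:ℕ) ↔ (l:ℕ)+1 ≤ (m:ℕ) := by
        constructor <;> intro h <;> [skip; omega]
        rcases Nat.lt_or_ge (l:ℕ) (m:ℕ) with h' | h'
        · omega
        · exfalso; exact h1 (Fin.ext (by omega))
      by_cases h3 : (l:ℕ) ≤ (m:ℕ)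
      · rw [if_pos h3, if_pos (h2.1 h3), if_neg h1, sub_self]
      · rw [if_neg h3, if_neg (fun hc => h3 (h2.2 hc)), if_neg h1, sub_self]
  rw [Finset.sum_congr rfl (fun m _ => this m), Finset.sum_ite_eq' _ l]
  simp

noncomputable def KVnorm (K : ℕ) (v : Fin (K+1) → ℂ) : ℝ :=
  (Finset.range (K+2) ×ˢ Finset.range (K+2)).sup' (by simp) fun p =>
    ‖tailSum K v p.1 - tailSum K v p.2‖

lemma abs_tailSum_sub_le (K : ℕ) (v : Fin (K+1) → ℂ) (p q : ℕ) :
    ‖tailSum K v p - tailSum K v q‖ ≤ KVnorm K v := by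
  have key : ∀ r : ℕ, tailSum K v r = tailSum K v (min r (K+1)) := by
    intro r
    rcases le_or_gt r (K+1) with h | h
    · rw [min_eq_left h]
    · rw [tailSum_eq_zero _ _ _ (by omega), tailSum_eq_zero _ _ _ (by omega)]
  rw [key p, key q]
  apply Finset.le_sup' (f := fun p : ℕ × ℕ => ‖tailSum K v p.1 - tailSum K v p.2‖)
    (b := (min p (K+1), min q (K+1)))
  simp only [Finset.mem_product, Finset.mem_range]
  omega

lemma KVnorm_nonneg (K : ℕ) (v : Fin (K+1) → ℂ) : 0 ≤ KVnorm K v := by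
  have := abs_tailSum_sub_le K v 0 0
  simpa using le_trans (by positivity) this

lemma KVnorm_le (K : ℕ) (v : Fin (K+1) → ℂ) (C : ℝ)
    (h : ∀ p < K+2, ∀ q < K+2, ‖tailSum K v p - tailSum K v q‖ ≤ C) :
    KVnorm K v ≤ C := by
  apply Finset.sup'_le
  rintro ⟨p, q⟩ hpq
  simp [Finset.mem_product] at hpq
  exact h p hpq.1 q hpq.2

lemma tailSum_smul (K : ℕ) (c : ℂ) (v : Fin (K+1) → ℂ) (j : ℕ) :
    tailSum K (c • v) j = c * tailSum K v j := by
  unfold tailSum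
  rw [Finset.mul_sum]
  exact Finset.sum_congr rfl (by intro m _; simp [mul_ite])

lemma KVnorm_smul (K : ℕ) (c : ℂ) (v : Fin (K+1) → ℂ) :
    KVnorm K (c • v) = ‖c‖ * KVnorm K v := by
  unfold KVnorm
  have hfun : (fun p : ℕ × ℕ => ‖tailSum K (c • v) p.1 - tailSum K (c • v) p.2‖)
      = (fun x => ‖c‖ * x) ∘ (fun p : ℕ × ℕ =>
        ‖tailSum K v p.1 - tailSum K v p.2‖) := by
    funext p
    simp only [Function.comp, tailSum_smul, ← mul_sub, norm_mul]
  rw [hfun]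
  exact (Finset.comp_sup'_eq_sup'_comp _ (fun x => ‖c‖ * x)
    (fun x y => mul_max_of_nonneg x y (norm_nonneg c))).symm

lemma KVnorm_pos (K : ℕ) (v : Fin (K+1) → ℂ) (hv : v ≠ 0) : 0 < KVnorm K v := by
  rcases lt_or_eq_of_le (KVnorm_nonneg K v) with h | h
  · exact h
  exfalso
  apply hv
  funext l
  have h1 := abs_tailSum_sub_le K v l ((l:ℕ)+1)
  rw [← h] at h1
  have h2 : tailSum K v l - tailSum K v ((l:ℕ)+1) = 0 := by
    have := norm_nonneg (tailSum K v l - tailSum K v ((l:ℕ)+1))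
    have h3 : ‖tailSum K v l - tailSum K v ((l:ℕ)+1)‖ = 0 := le_antisymm h1 this
    exact norm_eq_zero.1 h3
  have := tailSum_sub_succ K v l
  rw [h2] at this
  exact (this.symm : v l = 0)

lemma combo_abs_le (m : ℕ) (c d : ℕ → ℝ) (u : ℕ → ℂ)
    (hc0 : ∀ i, 0 ≤ c i) (hd0 : ∀ i, 0 ≤ d i)
    (hc1 : ∑ i ∈ Finset.range m, c i = 1) (hd1 : ∑ i ∈ Finset.range m, d i = 1)
    (C : ℝ) (hC : ∀ p < m, ∀ q < m, ‖u p - u q‖ ≤ C) :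
    ‖(∑ i ∈ Finset.range m, (c i : ℂ) * u i)
      - ∑ i ∈ Finset.range m, (d i : ℂ) * u i‖ ≤ C := by
  have hc1' : ∑ i ∈ Finset.range m, (c i : ℂ) = 1 := by
    rw [← Complex.ofReal_sum, hc1, Complex.ofReal_one]
  have hd1' : ∑ i ∈ Finset.range m, (d i : ℂ) = 1 := by
    rw [← Complex.ofReal_sum, hd1, Complex.ofReal_one]
  have key : (∑ i ∈ Finset.range m, (c i : ℂ) * u i) - ∑ i ∈ Finset.range m, (d i : ℂ) * u i
      = ∑ p ∈ Finset.range m, ∑ q ∈ Finset.range m, ((c p : ℂ) * (d q : ℂ)) * (u p - u q) := by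
    have expand : ∀ p, ∑ q ∈ Finset.range m, ((c p : ℂ) * (d q : ℂ)) * (u p - u q)
        = (c p : ℂ) * u p - (c p : ℂ) * ∑ q ∈ Finset.range m, (d q : ℂ) * u q := by
      intro p
      rw [Finset.sum_congr rfl (fun q _ => by ring :
        ∀ q ∈ Finset.range m, ((c p : ℂ) * (d q : ℂ)) * (u p - u q)
          = (c p : ℂ) * u p * (d q : ℂ) - (c p : ℂ) * ((d q : ℂ) * u q)),
        Finset.sum_sub_distrib, ← Finset.mul_sum, ← Finset.mul_sum, hd1', mul_one]
    rw [Finset.sum_congr rfl (fun p _ => expand p), Finset.sum_sub_distrib,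
      ← Finset.sum_mul, hc1', one_mul]
  rw [key]
  calc ‖∑ p ∈ Finset.range m, ∑ q ∈ Finset.range m, ((c p:ℂ) * (d q:ℂ)) * (u p - u q)‖
      ≤ ∑ p ∈ Finset.range m, ‖∑ q ∈ Finset.range m, ((c p:ℂ) * (d q:ℂ)) * (u p - u q)‖ :=
        norm_sum_le _ _
    _ ≤ ∑ p ∈ Finset.range m, ∑ q ∈ Finset.range m, (c p * d q) * C := by
        apply Finset.sum_le_sum
        intro p hp
        calc ‖∑ q ∈ Finset.range m, ((c p:ℂ) * (d q:ℂ)) * (u p - u q)‖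
            ≤ ∑ q ∈ Finset.range m, ‖((c p:ℂ) * (d q:ℂ)) * (u p - u q)‖ :=
              norm_sum_le _ _
          _ ≤ ∑ q ∈ Finset.range m, (c p * d q) * C := by
              apply Finset.sum_le_sum
              intro q hq
              rw [norm_mul, norm_mul, Complex.norm_of_nonneg (hc0 p),
                Complex.norm_of_nonneg (hd0 q)]
              exact mul_le_mul_of_nonneg_left
                (hC p (Finset.mem_range.1 hp) q (Finset.mem_range.1 hq))
                (mul_nonneg (hc0 p) (hd0 q))
    _ = C := by
        rw [Finset.sum_congr rfl (fun p _ => by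
          rw [← Finset.sum_mul, ← Finset.mul_sum, hd1, mul_one])]
        rw [← Finset.sum_mul, hc1, one_mul]
/-- The `K × K` companion matrix with ones on the superdiagonal and last row `(-a 0, …, -a (K-1))`. -/
def companion {K : ℕ} (a : Fin K → ℝ) : Matrix (Fin K) (Fin K) ℝ :=
  fun i j => if (i : ℕ) + 1 = (j : ℕ) then 1 else if (i : ℕ) = K - 1 then -a j else 0

lemma KV_step (K : ℕ) (b : Fin (K+1) → ℝ)
    (h0 : 0 ≤ b 0)
    (hmono : ∀ (i : ℕ) (h : i + 1 < K + 1), b ⟨i, by omega⟩ ≤ b ⟨i+1, h⟩)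
    (hlast : b (Fin.last K) ≤ 1)
    (v : Fin (K+1) → ℂ) :
    KVnorm K ((companion b).map (algebraMap ℝ ℂ) *ᵥ v) ≤ KVnorm K v := by
  classical
  set w := (companion b).map (algebraMap ℝ ℂ) *ᵥ v with hw
  set u := tailSum K v with hu
  -- extended coefficient sequence
  set B : ℕ → ℝ := fun l => if h : l < K + 1 then b ⟨l, h⟩ else 1 with hB
  have hBmono : ∀ i, B i ≤ B (i+1) := by
    intro i
    by_cases h1 : i + 1 < K + 1
    · simp only [hB]; rw [dif_pos (by omega : i < K+1), dif_pos h1]; exact hmono i h1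
    · by_cases h2 : i < K + 1
      · have hiK : i = K := by omega
        simp only [hB]; rw [dif_pos h2, dif_neg h1]
        have : (⟨i, h2⟩ : Fin (K+1)) = Fin.last K := by
          apply Fin.ext; simp [hiK]
        rw [this]; exact hlast
      · simp only [hB]; rw [dif_neg h2, dif_neg (by omega)]
  have hB0 : 0 ≤ B 0 := by
    simp only [hB]; rw [dif_pos (by omega : 0 < K+1)]
    convert h0 using 2
    exact Fin.ext (by simp)
  have hBnonneg : ∀ i, 0 ≤ B i := by
    intro i
    induction i with
    | zero => exact hB0
    | succ n ih => exact le_trans ih (hBmono n)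
  have hBtop : ∀ i, K ≤ i → B (i+1) = 1 := by
    intro i hi
    simp only [hB]; rw [dif_neg (by omega)]
  set c : ℕ → ℝ := fun i => B i - (if i = 0 then 0 else B (i-1)) with hc
  have hc0 : ∀ i, 0 ≤ c i := by
    intro i
    cases i with
    | zero => simpa [hc] using hB0
    | succ n => simpa [hc] using hBmono n
  have hcsum : ∀ m, ∑ i ∈ Finset.range (m+1), c i = B m := by
    intro m
    induction m with
    | zero => simp [hc]
    | succ n ih =>
      rw [Finset.sum_range_succ, ih, hc]
      simp
  have hc1 : ∑ i ∈ Finset.range (K+2), c i = 1 := by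
    rw [hcsum (K+1), hBtop K (le_refl K)]
  -- Abel summation identity
  have habela : ∀ m, ∑ i ∈ Finset.range (m+1), (c i : ℂ) * u i
      = (∑ l ∈ Finset.range m, (B l : ℂ) * (u l - u (l+1))) + (B m : ℂ) * u m := by
    intro m
    induction m with
    | zero => simp [hc]
    | succ n ih =>
      rw [Finset.sum_range_succ, ih, Finset.sum_range_succ]
      have : (c (n+1) : ℂ) = (B (n+1) : ℂ) - (B n : ℂ) := by
        simp only [hc, if_neg (Nat.succ_ne_zero n), Nat.add_sub_cancel]; push_cast; ring
      rw [this]; ring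
  -- the sum  ∑ b l * v l equals the convex combination ∑ c i * u i
  have hbv : ∑ i ∈ Finset.range (K+2), (c i : ℂ) * u i
      = ∑ l : Fin (K+1), ((b l : ℂ)) * v l := by
    rw [habela (K+1)]
    have hu0 : u (K+1) = 0 := tailSum_eq_zero K v (K+1) (le_refl _)
    rw [hu0, mul_zero, add_zero]
    rw [Finset.sum_range (fun l => (B l : ℂ) * (u l - u (l+1)))]
    apply Finset.sum_congr rfl
    intro l _
    have h1 : B (l : ℕ) = b l := by
      simp only [hB]; rw [dif_pos l.isLt]
    have h2 : u (l:ℕ) - u ((l:ℕ)+1) = v l := tailSum_sub_succ K v l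
    rw [h1, h2]
  -- entries of the companion matrix over ℂ
  have hcomp : ∀ (i l : Fin (K+1)), (companion b).map (algebraMap ℝ ℂ) i l
      = if (i:ℕ)+1 = (l:ℕ) then 1 else if (i:ℕ) = K then -((b l : ℝ) : ℂ) else 0 := by
    intro i l
    simp only [companion, Matrix.map_apply, Nat.add_sub_cancel]
    split_ifs <;> simp
  have hwlt : ∀ i : Fin (K+1), ∀ h : (i:ℕ) < K, w i = v ⟨(i:ℕ)+1, by omega⟩ := by
    intro i hi
    show ((companion b).map (algebraMap ℝ ℂ) *ᵥ v) i = _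
    rw [Matrix.mulVec, dotProduct]
    have : ∀ l : Fin (K+1), (companion b).map (algebraMap ℝ ℂ) i l * v l
        = if l = (⟨(i:ℕ)+1, by omega⟩ : Fin (K+1)) then v l else 0 := by
      intro l
      rw [hcomp i l]
      by_cases h1 : (i:ℕ)+1 = (l:ℕ)
      · rw [if_pos h1, if_pos (Fin.ext h1.symm), one_mul]
      · have h2 : ¬ l = (⟨(i:ℕ)+1, by omega⟩ : Fin (K+1)) := by
          intro hcc
          exact h1 (by rw [hcc])
        rw [if_neg h1, if_neg h2, if_neg (by omega : ¬ (i:ℕ) = K), zero_mul]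
    rw [Finset.sum_congr rfl (fun l _ => this l), Finset.sum_ite_eq' _ _ v]
    simp
  have hwlast : w (Fin.last K) = -(∑ l : Fin (K+1), ((b l : ℝ):ℂ) * v l) := by
    show ((companion b).map (algebraMap ℝ ℂ) *ᵥ v) (Fin.last K) = _
    rw [Matrix.mulVec, dotProduct, ← Finset.sum_neg_distrib]
    apply Finset.sum_congr rfl
    intro l _
    rw [hcomp]
    rw [if_neg (by simp [Fin.last]; omega), if_pos (by simp [Fin.last])]
    ring
  -- tail sums of w
  have hSw : ∀ j : ℕ, j ≤ K →
      tailSum K w j = u (j+1) - ∑ l : Fin (K+1), ((b l : ℝ):ℂ) * v l := by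
    intro j hj
    unfold tailSum
    rw [Fin.sum_univ_castSucc]
    have hlastterm : (if j ≤ ((Fin.last K : Fin (K+1)):ℕ) then w (Fin.last K) else 0)
        = -(∑ l : Fin (K+1), ((b l : ℝ):ℂ) * v l) := by
      rw [if_pos (by simp [Fin.last]; omega), hwlast]
    rw [hlastterm]
    have hfirst : ∑ l : Fin K, (if j ≤ ((l.castSucc : Fin (K+1)):ℕ) then w l.castSucc else 0)
        = u (j+1) := by
      have hterm : ∀ l : Fin K, (if j ≤ ((l.castSucc : Fin (K+1)):ℕ) then w l.castSucc else 0)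
          = if j+1 ≤ ((l.succ : Fin (K+1)):ℕ) then v l.succ else 0 := by
        intro l
        have hc1 : ((l.castSucc : Fin (K+1)):ℕ) = (l:ℕ) := rfl
        have hc2 : ((l.succ : Fin (K+1)):ℕ) = (l:ℕ)+1 := rfl
        have hwv : w l.castSucc = v l.succ := by
          rw [hwlt l.castSucc (by simp [hc1, l.isLt])]
          congr 1
        rw [hc1, hc2, hwv]
        congr 1
        simp [Nat.succ_le_succ_iff]
      rw [Finset.sum_congr rfl (fun l _ => hterm l)]
      show _ = ∑ m : Fin (K+1), if j+1 ≤ (m:ℕ) then v m else 0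
      rw [Fin.sum_univ_succ (fun m : Fin (K+1) => if j+1 ≤ (m:ℕ) then v m else 0)]
      simp
    rw [hfirst]
    ring
  set CU := ∑ i ∈ Finset.range (K+2), (c i : ℂ) * u i with hCU
  have hSw' : ∀ j : ℕ, j < K+2 → tailSum K w j = (if j = K+1 then CU else u (j+1)) - CU := by
    intro j hj
    by_cases hjK : j = K+1
    · rw [if_pos hjK, hjK, tailSum_eq_zero K w (K+1) (le_refl _), sub_self]
    · rw [if_neg hjK, hSw j (by omega), ← hbv]
  -- the two convex-combination weight systems
  set e : ℕ → ℕ → ℝ := fun j i => if j = K+1 then c i else (if i = j+1 then 1 else 0) with he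
  have hvc : ∀ j, j < K+2 → (if j = K+1 then CU else u (j+1))
      = ∑ i ∈ Finset.range (K+2), ((e j i : ℝ):ℂ) * u i := by
    intro j hj
    by_cases hjK : j = K+1
    · simp only [he, if_pos hjK, hCU]
    · rw [if_neg hjK]
      simp only [he, if_neg hjK]
      have : ∀ i, (((if i = j+1 then (1:ℝ) else 0) : ℝ):ℂ) * u i
          = if i = j+1 then u i else 0 := by
        intro i; split_ifs <;> simp
      rw [Finset.sum_congr rfl (fun i _ => this i), Finset.sum_ite_eq' _ _ u]
      rw [if_pos (Finset.mem_range.2 (by omega))]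
  have he0 : ∀ j, ∀ i, 0 ≤ e j i := by
    intro j i
    simp only [he]
    split_ifs with h1 h2
    · exact hc0 i
    · exact zero_le_one
    · exact le_refl 0
  have hesum : ∀ j, j < K+2 → ∑ i ∈ Finset.range (K+2), e j i = 1 := by
    intro j hj
    by_cases hjK : j = K+1
    · simp only [he, if_pos hjK]; exact hc1
    · simp only [he, if_neg hjK]
      rw [Finset.sum_ite_eq' _ _ (fun _ => (1:ℝ))]
      rw [if_pos (Finset.mem_range.2 (by omega))]
  -- conclude
  apply KVnorm_le
  intro p hp q hq
  rw [hSw' p hp, hSw' q hq, sub_sub_sub_cancel_right, hvc p hp, hvc q hq]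
  exact combo_abs_le (K+2) (e p) (e q) u (he0 p) (he0 q) (hesum p hp) (hesum q hq)
    (KVnorm K v) (fun r hr s hs => abs_tailSum_sub_le K v r s)
lemma companion_mul_diagC (K : ℕ) (a' : Fin (K+1) → ℝ) (R : ℝ) (hR : 0 < R) :
    (companion a').map (algebraMap ℝ ℂ)
        * Matrix.diagonal (fun i : Fin (K+1) => ((R : ℂ)) ^ (i:ℕ))
      = (R : ℂ) • (Matrix.diagonal (fun i : Fin (K+1) => ((R : ℂ)) ^ (i:ℕ)) *
          (companion (fun l : Fin (K+1) => a' l / R ^ (K + 1 - (l:ℕ)))).map (algebraMap ℝ ℂ)) := by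
  have hRC : ((R : ℂ)) ≠ 0 := by
    simpa using (ne_of_gt hR)
  ext i l
  simp only [Matrix.mul_diagonal, Matrix.diagonal_mul, Matrix.smul_apply, smul_eq_mul,
    companion, Matrix.map_apply, Nat.add_sub_cancel]
  split_ifs with h1 h2
  · simp only [_root_.map_one, one_mul, ← h1, mul_one]
    rw [pow_succ]
    ring
  · have hpow : ((R:ℂ)) ^ ((l:ℕ)) * (R:ℂ) ^ (K + 1 - (l:ℕ)) = (R:ℂ) * (R:ℂ) ^ K := by
      rw [← pow_add, ← pow_succ']
      congr 1
      have := l.isLt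
      omega
    have hcast1 : (algebraMap ℝ ℂ) (-a' l) = -((a' l : ℝ) : ℂ) := by
      simp
    have hcast2 : (algebraMap ℝ ℂ) (-(a' l / R ^ (K + 1 - (l:ℕ))))
        = -(((a' l : ℝ) : ℂ) / ((R:ℂ)) ^ (K + 1 - (l:ℕ))) := by
      push_cast
      simp
    rw [hcast1, hcast2, h2]
    field_simp
    linear_combination (-((a' l : ℝ) : ℂ)) * hpow
  · simp
lemma prod_mul_diagC (K J : ℕ) (R : ℝ) (hR : 0 < R) (a : Fin (J+1) → Fin (K+1) → ℝ)
    (js : List (Fin (J+1))) :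
    (js.map fun j => (companion (a j)).map (algebraMap ℝ ℂ)).prod
        * Matrix.diagonal (fun i : Fin (K+1) => ((R : ℂ)) ^ (i:ℕ))
      = ((R : ℂ)) ^ js.length • (Matrix.diagonal (fun i : Fin (K+1) => ((R : ℂ)) ^ (i:ℕ)) *
          (js.map fun j =>
            (companion (fun l : Fin (K+1) => a j l / R ^ (K + 1 - (l:ℕ)))).map
              (algebraMap ℝ ℂ)).prod) := by
  induction js with
  | nil => simp
  | cons j t ih =>
    simp only [List.map_cons, List.prod_cons, List.length_cons]
    rw [mul_assoc, ih, mul_smul_comm, ← mul_assoc, companion_mul_diagC K (a j) R hR,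
      smul_mul_assoc, smul_smul, mul_assoc]
    rw [pow_succ]

theorem stmt13 (J K : ℕ) (a : Fin (J + 1) → Fin (K + 1) → ℝ)
    (hpos : ∀ j k, 0 < a j k)
    -- the maximal ratio a^{(j)}_k / a^{(j)}_{k+1}, with the convention a^{(j)}_{K+1} = 1
    (R : ℝ)
    (hR : R = Finset.univ.sup' (Finset.univ_nonempty)
      (fun p : Fin (J + 1) × Fin (K + 1) =>
        a p.1 p.2 / (if h : (p.2 : ℕ) + 1 < K + 1 then a p.1 ⟨(p.2 : ℕ) + 1, h⟩ else 1)))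
    (js : List (Fin (J + 1))) :
    ∀ z : ℂ,
      (((js.map fun j => companion (a j)).prod.map (algebraMap ℝ ℂ)).charpoly).IsRoot z →
        ‖z‖ ≤ R ^ js.length := by
  intro z hz
  set k := js.length with hk
  -- positivity of denominators
  have hden : ∀ p : Fin (J+1) × Fin (K+1),
      0 < (if h : ((p.2:ℕ)) + 1 < K + 1 then a p.1 ⟨(p.2:ℕ) + 1, h⟩ else 1) := by
    intro p
    split_ifs with h
    · exact hpos _ _
    · exact one_pos
  have hRpos : 0 < R := by
    rw [hR]
    refine lt_of_lt_of_le ?_ (Finset.le_sup' _ (Finset.mem_univ ((0 : Fin (J+1)), (0 : Fin (K+1)))))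
    exact div_pos (hpos 0 0) (hden (0, 0))
  have hRC : ((R:ℂ)) ≠ 0 := by simpa using (ne_of_gt hRpos)
  have hRle : ∀ (j : Fin (J+1)) (kk : Fin (K+1)),
      a j kk ≤ R * (if h : ((kk:ℕ)) + 1 < K + 1 then a j ⟨(kk:ℕ) + 1, h⟩ else 1) := by
    intro j kk
    have h1 : a j kk / (if h : ((kk:ℕ)) + 1 < K + 1 then a j ⟨(kk:ℕ) + 1, h⟩ else 1) ≤ R := by
      rw [hR]
      exact Finset.le_sup' (fun p : Fin (J + 1) × Fin (K + 1) =>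
        a p.1 p.2 / (if h : (p.2 : ℕ) + 1 < K + 1 then a p.1 ⟨(p.2 : ℕ) + 1, h⟩ else 1))
        (Finset.mem_univ (j, kk))
    calc a j kk = (a j kk / (if h : ((kk:ℕ)) + 1 < K + 1 then a j ⟨(kk:ℕ) + 1, h⟩ else 1))
        * (if h : ((kk:ℕ)) + 1 < K + 1 then a j ⟨(kk:ℕ) + 1, h⟩ else 1) :=
          (div_mul_cancel₀ _ (ne_of_gt (hden (j, kk)))).symm
      _ ≤ R * (if h : ((kk:ℕ)) + 1 < K + 1 then a j ⟨(kk:ℕ) + 1, h⟩ else 1) :=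
          mul_le_mul_of_nonneg_right h1 (le_of_lt (hden (j, kk)))
  -- the rescaled coefficients
  set b : Fin (J+1) → Fin (K+1) → ℝ := fun j l => a j l / R ^ (K + 1 - (l:ℕ)) with hb
  have hb0 : ∀ j, 0 ≤ b j 0 := fun j => le_of_lt (div_pos (hpos j 0) (by positivity))
  have hbmono : ∀ j, ∀ (i : ℕ) (h : i + 1 < K + 1),
      b j ⟨i, by omega⟩ ≤ b j ⟨i+1, h⟩ := by
    intro j i h
    simp only [hb]
    have hle : a j ⟨i, by omega⟩ ≤ R * a j ⟨i+1, h⟩ := by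
      have := hRle j ⟨i, by omega⟩
      rwa [dif_pos (by simpa using h)] at this
    have h1 : K + 1 - i = (K + 1 - (i+1)) + 1 := by omega
    rw [div_le_div_iff₀ (by positivity) (by positivity)]
    calc a j ⟨i, by omega⟩ * R ^ (K + 1 - (i+1))
        ≤ (R * a j ⟨i+1, h⟩) * R ^ (K + 1 - (i+1)) :=
          mul_le_mul_of_nonneg_right hle (by positivity)
      _ = a j ⟨i+1, h⟩ * R ^ (K + 1 - i) := by
          rw [h1, pow_succ]
          ring
  have hblast : ∀ j, b j (Fin.last K) ≤ 1 := by
    intro j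
    simp only [hb]
    have : ((Fin.last K : Fin (K+1)):ℕ) = K := rfl
    rw [this, show K + 1 - K = 1 by omega, pow_one]
    rw [div_le_one hRpos]
    have := hRle j (Fin.last K)
    rwa [dif_neg (by simp [Fin.last]), mul_one] at this
  -- eigenvector
  obtain ⟨v, hv0, hMv⟩ := root_charpoly_eigen _ z hz
  -- move the map inside the product
  have hmapprod : ((js.map fun j => companion (a j)).prod).map (algebraMap ℝ ℂ)
      = (js.map fun j => (companion (a j)).map (algebraMap ℝ ℂ)).prod := by
    have := map_list_prod ((algebraMap ℝ ℂ).mapMatrix) (js.map fun j => companion (a j))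
    simpa [List.map_map, RingHom.mapMatrix_apply, Function.comp_def] using this
  rw [hmapprod] at hMv
  -- transported eigenvector
  set x : Fin (K+1) → ℂ := fun i => (((R:ℂ)) ^ (i:ℕ))⁻¹ * v i with hx
  have hDx : Matrix.diagonal (fun i : Fin (K+1) => ((R : ℂ)) ^ (i:ℕ)) *ᵥ x = v := by
    funext i
    rw [Matrix.mulVec_diagonal]
    simp only [hx]; rw [← mul_assoc, mul_inv_cancel₀ (pow_ne_zero _ hRC), one_mul]
  have hx0 : x ≠ 0 := by
    intro hc
    apply hv0
    rw [← hDx, hc]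
    simp
  set Q := (js.map fun j =>
    (companion (fun l : Fin (K+1) => a j l / R ^ (K + 1 - (l:ℕ)))).map (algebraMap ℝ ℂ)).prod
    with hQ
  have hQx : Q *ᵥ x = (z / ((R:ℂ)) ^ k) • x := by
    have h1 : (js.map fun j => (companion (a j)).map (algebraMap ℝ ℂ)).prod *ᵥ v = z • v := hMv
    rw [← hDx, Matrix.mulVec_mulVec, prod_mul_diagC K J R hRpos a js,
      Matrix.smul_mulVec, ← Matrix.mulVec_mulVec] at h1
    funext i
    have h2 := congrFun h1 i
    simp only [Pi.smul_apply, smul_eq_mul, Matrix.mulVec_diagonal, Complex.coe_algebraMap] at h2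
    have hRiC : ((R:ℂ)) ^ (i:ℕ) ≠ 0 := pow_ne_zero _ hRC
    have hRkC : ((R:ℂ)) ^ k ≠ 0 := pow_ne_zero _ hRC
    simp only [hQ, Pi.smul_apply, smul_eq_mul, Complex.coe_algebraMap]
    rw [div_mul_eq_mul_div, eq_div_iff hRkC]
    rw [← hk] at h2
    apply mul_left_cancel₀ hRiC
    linear_combination h2
  -- norm is non-increasing along the product
  have hdesc : ∀ (t : List (Fin (J+1))) (y : Fin (K+1) → ℂ),
      KVnorm K ((t.map fun j =>
        (companion (fun l : Fin (K+1) => a j l / R ^ (K + 1 - (l:ℕ)))).map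
          (algebraMap ℝ ℂ)).prod *ᵥ y) ≤ KVnorm K y := by
    intro t
    induction t with
    | nil => intro y; simp
    | cons j s ih =>
      intro y
      simp only [List.map_cons, List.prod_cons, ← Matrix.mulVec_mulVec]
      exact le_trans (KV_step K (b j) (hb0 j) (hbmono j) (hblast j) _) (ih y)
  have hfinal := le_trans (hQx ▸ hdesc js x) (le_refl (KVnorm K x))
  rw [KVnorm_smul] at hfinal
  have hxpos := KVnorm_pos K x hx0
  have habs : ‖z / ((R:ℂ)) ^ k‖ ≤ 1 := by
    by_contra hcon
    push_neg at hcon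
    have : KVnorm K x < ‖z / ((R:ℂ)) ^ k‖ * KVnorm K x := by
      nlinarith
    linarith
  have habs2 : ‖z‖ / R ^ k ≤ 1 := by
    rwa [norm_div, norm_pow, Complex.norm_of_nonneg hRpos.le] at habs
  rw [div_le_one (by positivity)] at habs2
  exact habs2
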